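/- For every natural number m and every natural number a ≥ 2, the Goodstein sequence for m starting at base a terminates: defining m₀ = m and m_{i+1} = G_{a+i}(m_i), there exists a natural number k with m_k = 0. -/

import Mathlib

open Ordinal


/-- Hereditary base-change function `B_n`: `baseChange n m` replaces every
occurrence of `n` by `n + 1` in the hereditary base-`n` representation of `m`
(for `n ≥ 2`). It is defined by peeling off the leading base-`n` digit:
if `m > 0` and `e = log_n m`, then
`B_n(m) = (m / n^e) · (n+1)^{B_n(e)} + B_n(m % n^e)`, and `B_n(0) = 0`. -/
def baseChange (n : ℕ) : ℕ → ℕ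
  | 0 => 0
  | (m + 1) =>
    ((m + 1) / n ^ Nat.log n (m + 1)) * (n + 1) ^ (baseChange n (Nat.log n (m + 1))) +
      baseChange n ((m + 1) % n ^ Nat.log n (m + 1))
  decreasing_by
  · exact Nat.log_lt_self n (Nat.succ_ne_zero m)
  · have hpos : 0 < n ^ Nat.log n (m + 1) := by
      rcases Nat.eq_zero_or_pos n with h | h
      · subst h; simp
      · exact pow_pos h _
    exact Nat.lt_of_lt_of_le (Nat.mod_lt _ hpos)
      (Nat.pow_log_le_self n (Nat.succ_ne_zero m))

/-- The Goodstein step `G_n(m) = B_n(m) − 1` for `m > 0`, and `G_n(0) = 0`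
(truncated subtraction handles both cases, since `B_n(0) = 0`). -/
def goodsteinStep (n m : ℕ) : ℕ := baseChange n m - 1

/-- The Goodstein sequence for `m` starting at base `a`:
`m₀ = m` and `m_{i+1} = G_{a+i}(m_i)`. -/
def goodsteinSeq (a m : ℕ) : ℕ → ℕ
  | 0 => m
  | (i + 1) => goodsteinStep (a + i) (goodsteinSeq a m i)

/-- ordinal value of hereditary base-n representation with n ↦ ω -/
noncomputable def oVal (n : ℕ) : ℕ → Ordinal.{0}
  | 0 => 0
  | (m + 1) =>
    omega0 ^ (oVal n (Nat.log n (m + 1))) * (((m + 1) / n ^ Nat.log n (m + 1) : ℕ) : Ordinal) +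
      oVal n ((m + 1) % n ^ Nat.log n (m + 1))
  decreasing_by
  · exact Nat.log_lt_self n (Nat.succ_ne_zero m)
  · have hpos : 0 < n ^ Nat.log n (m + 1) := by
      rcases Nat.eq_zero_or_pos n with h | h
      · subst h; simp
      · exact pow_pos h _
    exact Nat.lt_of_lt_of_le (Nat.mod_lt _ hpos)
      (Nat.pow_log_le_self n (Nat.succ_ne_zero m))

lemma baseChange_eq (n : ℕ) {m : ℕ} (hm : m ≠ 0) :
    baseChange n m =
      (m / n ^ Nat.log n m) * (n + 1) ^ (baseChange n (Nat.log n m)) +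
        baseChange n (m % n ^ Nat.log n m) := by
  obtain ⟨k, rfl⟩ := Nat.exists_eq_succ_of_ne_zero hm
  rw [baseChange]

lemma oVal_eq (n : ℕ) {m : ℕ} (hm : m ≠ 0) :
    oVal n m =
      omega0 ^ (oVal n (Nat.log n m)) * ((m / n ^ Nat.log n m : ℕ) : Ordinal) +
        oVal n (m % n ^ Nat.log n m) := by
  obtain ⟨k, rfl⟩ := Nat.exists_eq_succ_of_ne_zero hm
  rw [oVal]

lemma baseChange_zero (n : ℕ) : baseChange n 0 = 0 := by rw [baseChange]
lemma oVal_zero (n : ℕ) : oVal n 0 = 0 := by rw [oVal]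

lemma pow_log_pos {n m : ℕ} (hn : 2 ≤ n) : 0 < n ^ Nat.log n m :=
  pow_pos (by omega) _

lemma div_log_pos {n m : ℕ} (hn : 2 ≤ n) (hm : m ≠ 0) :
    0 < m / n ^ Nat.log n m :=
  Nat.div_pos (Nat.pow_log_le_self n hm) (pow_log_pos hn)

lemma div_log_lt {n m : ℕ} (hn : 2 ≤ n) : m / n ^ Nat.log n m < n := by
  rw [Nat.div_lt_iff_lt_mul (pow_log_pos hn), ← pow_succ']
  exact Nat.lt_pow_succ_log_self (by omega) m

lemma baseChange_pos {n m : ℕ} (hn : 2 ≤ n) (hm : m ≠ 0) : 0 < baseChange n m := by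
  rw [baseChange_eq n hm]
  have h1 := div_log_pos hn hm
  have h2 : 0 < (n + 1) ^ (baseChange n (Nat.log n m)) := pow_pos (by omega) _
  positivity

lemma powAuxB {n : ℕ} (hn : 2 ≤ n) :
    ∀ m e : ℕ, (∀ x y, y ≤ e → x < y → baseChange n x < baseChange n y) →
      m < n ^ e → baseChange n m < (n + 1) ^ baseChange n e := by
  intro m
  induction m using Nat.strong_induction_on with
  | _ m IH =>
    intro e hmono hme
    rcases Nat.eq_zero_or_pos m with rfl | hm
    · rw [baseChange_zero]; exact pow_pos (by omega) _
    have hm0 : m ≠ 0 := by omega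
    set e₁ := Nat.log n m with he₁
    have he₁e : e₁ < e := Nat.log_lt_of_lt_pow hm0 hme
    set c := m / n ^ e₁ with hc
    set r := m % n ^ e₁ with hr
    have hrlt : r < n ^ e₁ := Nat.mod_lt _ (pow_log_pos hn)
    have hrm : r < m := lt_of_lt_of_le hrlt (Nat.pow_log_le_self n hm0)
    have hBr : baseChange n r < (n + 1) ^ baseChange n e₁ :=
      IH r hrm e₁ (fun x y hy hxy => hmono x y (hy.trans he₁e.le) hxy) hrlt
    have hclt : c < n := div_log_lt hn
    have hBe : baseChange n e₁ < baseChange n e := hmono e₁ e le_rfl he₁e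
    rw [baseChange_eq n hm0, ← he₁, ← hc, ← hr]
    calc c * (n + 1) ^ baseChange n e₁ + baseChange n r
        < c * (n + 1) ^ baseChange n e₁ + (n + 1) ^ baseChange n e₁ := by omega
      _ = (c + 1) * (n + 1) ^ baseChange n e₁ := by ring
      _ ≤ (n + 1) * (n + 1) ^ baseChange n e₁ := by
          exact Nat.mul_le_mul_right _ (by omega)
      _ = (n + 1) ^ (baseChange n e₁ + 1) := by ring
      _ ≤ (n + 1) ^ baseChange n e := Nat.pow_le_pow_right (by omega) (by omega)

lemma monoB {n : ℕ} (hn : 2 ≤ n) :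
    ∀ m' m : ℕ, m < m' → baseChange n m < baseChange n m' := by
  intro m'
  induction m' using Nat.strong_induction_on with
  | _ m' IH =>
    intro m hm
    have hm' : m' ≠ 0 := by omega
    set e' := Nat.log n m' with he'
    have hpow : n ^ e' ≤ m' := Nat.pow_log_le_self n hm'
    have hlt' : m' < n ^ (e' + 1) := by
      rw [pow_succ']
      have := Nat.lt_pow_succ_log_self (b := n) (by omega) m'
      rw [← he'] at this
      rwa [pow_succ'] at this
    have he'm' : e' < m' := Nat.log_lt_self n hm'
    have hmono : ∀ x y, y ≤ e' → x < y → baseChange n x < baseChange n y :=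
      fun x y hy hxy => IH y (lt_of_le_of_lt hy he'm') x hxy
    set P := (n + 1) ^ baseChange n e' with hP
    set c' := m' / n ^ e' with hc'
    set r' := m' % n ^ e' with hr'
    have hc'pos : 0 < c' := div_log_pos hn hm'
    have hr'lt : r' < n ^ e' := Nat.mod_lt _ (pow_log_pos hn)
    have hr'm' : r' < m' := lt_of_lt_of_le hr'lt hpow
    have hBr' : baseChange n r' < P := powAuxB hn r' e' hmono hr'lt
    rw [baseChange_eq n hm', ← he', ← hc', ← hr', ← hP]
    by_cases hcase : m < n ^ e'
    · have h1 : baseChange n m < P := powAuxB hn m e' hmono hcase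
      have h2 : P ≤ c' * P := Nat.le_mul_of_pos_left _ hc'pos
      omega
    · push_neg at hcase
      have hmne : m ≠ 0 := by
        have : 0 < n ^ e' := pow_log_pos hn
        omega
      have hlog : Nat.log n m = e' :=
        Nat.log_eq_of_pow_le_of_lt_pow hcase (lt_trans hm hlt')
      set c := m / n ^ e' with hcc
      set r := m % n ^ e' with hrr
      have hrlt : r < n ^ e' := Nat.mod_lt _ (pow_log_pos hn)
      have hBr : baseChange n r < P := powAuxB hn r e' hmono hrlt
      have hcle : c ≤ c' := Nat.div_le_div_right hm.le
      rw [baseChange_eq n hmne, hlog, ← hcc, ← hrr, ← hP]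
      rcases lt_or_eq_of_le hcle with hclt | hceq
      · have : (c + 1) * P ≤ c' * P := Nat.mul_le_mul_right _ (by omega)
        have hexp : c * P + baseChange n r < (c + 1) * P := by
          have : (c + 1) * P = c * P + P := by ring
          omega
        omega
      · have hm1 := Nat.div_add_mod m (n ^ e')
        have hm2 := Nat.div_add_mod m' (n ^ e')
        rw [← hcc, ← hrr] at hm1
        rw [← hc', ← hr'] at hm2
        have hrr' : r < r' := by rw [hceq] at hm1; omega
        have hBrr' : baseChange n r < baseChange n r' := IH r' hr'm' r hrr'
        rw [hceq]
        omega

lemma powB {n : ℕ} (hn : 2 ≤ n) {m e : ℕ} (h : m < n ^ e) :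
    baseChange n m < (n + 1) ^ baseChange n e :=
  powAuxB hn m e (fun x y _ hxy => monoB hn y x hxy) h

lemma omega_pow_mul_succ_le {α β : Ordinal} (c : ℕ) (h : α < β) :
    omega0 ^ α * ((c : Ordinal) + 1) ≤ omega0 ^ β := by
  calc omega0 ^ α * ((c : Ordinal) + 1) ≤ omega0 ^ α * omega0 := by
        apply mul_le_mul_right
        exact_mod_cast (nat_lt_omega0 (c + 1)).le
    _ = omega0 ^ (α + 1) := by rw [add_one_eq_succ, opow_succ]
    _ ≤ omega0 ^ β := opow_le_opow_right omega0_pos (by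
        rw [add_one_eq_succ]; exact Order.succ_le_of_lt h)

lemma powAuxO {n : ℕ} (hn : 2 ≤ n) :
    ∀ m e : ℕ, (∀ x y, y ≤ e → x < y → oVal n x < oVal n y) →
      m < n ^ e → oVal n m < omega0 ^ oVal n e := by
  intro m
  induction m using Nat.strong_induction_on with
  | _ m IH =>
    intro e hmono hme
    rcases Nat.eq_zero_or_pos m with rfl | hm
    · rw [oVal_zero]; exact opow_pos _ omega0_pos
    have hm0 : m ≠ 0 := by omega
    set e₁ := Nat.log n m with he₁
    have he₁e : e₁ < e := Nat.log_lt_of_lt_pow hm0 hme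
    set c := m / n ^ e₁ with hc
    set r := m % n ^ e₁ with hr
    have hrlt : r < n ^ e₁ := Nat.mod_lt _ (pow_log_pos hn)
    have hrm : r < m := lt_of_lt_of_le hrlt (Nat.pow_log_le_self n hm0)
    have hOr : oVal n r < omega0 ^ oVal n e₁ :=
      IH r hrm e₁ (fun x y hy hxy => hmono x y (hy.trans he₁e.le) hxy) hrlt
    have hOe : oVal n e₁ < oVal n e := hmono e₁ e le_rfl he₁e
    rw [oVal_eq n hm0, ← he₁, ← hc, ← hr]
    calc omega0 ^ oVal n e₁ * (c : Ordinal) + oVal n r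
        < omega0 ^ oVal n e₁ * (c : Ordinal) + omega0 ^ oVal n e₁ := by
          rwa [add_lt_add_iff_left]
      _ = omega0 ^ oVal n e₁ * ((c : Ordinal) + 1) := by rw [mul_add, mul_one]
      _ ≤ omega0 ^ oVal n e := omega_pow_mul_succ_le c hOe

lemma monoO {n : ℕ} (hn : 2 ≤ n) :
    ∀ m' m : ℕ, m < m' → oVal n m < oVal n m' := by
  intro m'
  induction m' using Nat.strong_induction_on with
  | _ m' IH =>
    intro m hm
    have hm' : m' ≠ 0 := by omega
    set e' := Nat.log n m' with he'
    have hpow : n ^ e' ≤ m' := Nat.pow_log_le_self n hm'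
    have hlt' : m' < n ^ (e' + 1) := by
      have := Nat.lt_pow_succ_log_self (b := n) (by omega) m'
      rwa [← he'] at this
    have he'm' : e' < m' := Nat.log_lt_self n hm'
    have hmono : ∀ x y, y ≤ e' → x < y → oVal n x < oVal n y :=
      fun x y hy hxy => IH y (lt_of_le_of_lt hy he'm') x hxy
    set c' := m' / n ^ e' with hc'
    set r' := m' % n ^ e' with hr'
    have hc'pos : 0 < c' := div_log_pos hn hm'
    have hr'lt : r' < n ^ e' := Nat.mod_lt _ (pow_log_pos hn)
    have hr'm' : r' < m' := lt_of_lt_of_le hr'lt hpow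
    rw [oVal_eq n hm', ← he', ← hc', ← hr']
    by_cases hcase : m < n ^ e'
    · have h1 : oVal n m < omega0 ^ oVal n e' := powAuxO hn m e' hmono hcase
      calc oVal n m < omega0 ^ oVal n e' := h1
        _ ≤ omega0 ^ oVal n e' * (c' : Ordinal) := by
            conv_lhs => rw [← mul_one (omega0 ^ oVal n e')]
            exact mul_le_mul_right (by exact_mod_cast hc'pos) _
        _ ≤ _ := le_self_add
    · push_neg at hcase
      have hmne : m ≠ 0 := by
        have : 0 < n ^ e' := pow_log_pos hn
        omega
      have hlog : Nat.log n m = e' :=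
        Nat.log_eq_of_pow_le_of_lt_pow hcase (lt_trans hm hlt')
      set c := m / n ^ e' with hcc
      set r := m % n ^ e' with hrr
      have hrlt : r < n ^ e' := Nat.mod_lt _ (pow_log_pos hn)
      have hOr : oVal n r < omega0 ^ oVal n e' := powAuxO hn r e' hmono hrlt
      have hcle : c ≤ c' := Nat.div_le_div_right hm.le
      rw [oVal_eq n hmne, hlog, ← hcc, ← hrr]
      rcases lt_or_eq_of_le hcle with hclt | hceq
      · calc omega0 ^ oVal n e' * (c : Ordinal) + oVal n r
            < omega0 ^ oVal n e' * (c : Ordinal) + omega0 ^ oVal n e' := by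
              rwa [add_lt_add_iff_left]
          _ = omega0 ^ oVal n e' * ((c : Ordinal) + 1) := by rw [mul_add, mul_one]
          _ ≤ omega0 ^ oVal n e' * (c' : Ordinal) := by
              apply mul_le_mul_right
              exact_mod_cast hclt
          _ ≤ _ := le_self_add
      · have hm1 := Nat.div_add_mod m (n ^ e')
        have hm2 := Nat.div_add_mod m' (n ^ e')
        rw [← hcc, ← hrr] at hm1
        rw [← hc', ← hr'] at hm2
        have hrr' : r < r' := by rw [hceq] at hm1; omega
        have hOrr' : oVal n r < oVal n r' := IH r' hr'm' r hrr'
        rw [hceq]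
        rwa [add_lt_add_iff_left]

lemma powO {n : ℕ} (hn : 2 ≤ n) {m e : ℕ} (h : m < n ^ e) :
    oVal n m < omega0 ^ oVal n e :=
  powAuxO hn m e (fun x y _ hxy => monoO hn y x hxy) h

lemma oVal_baseChange {n : ℕ} (hn : 2 ≤ n) :
    ∀ m : ℕ, oVal (n + 1) (baseChange n m) = oVal n m := by
  intro m
  induction m using Nat.strong_induction_on with
  | _ m IH =>
    rcases Nat.eq_zero_or_pos m with rfl | hm
    · rw [baseChange_zero, oVal_zero, oVal_zero]
    have hm0 : m ≠ 0 := by omega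
    set e := Nat.log n m with he
    set c := m / n ^ e with hc
    set r := m % n ^ e with hr
    set P := (n + 1) ^ baseChange n e with hP
    have hem : e < m := Nat.log_lt_self n hm0
    have hrlt : r < n ^ e := Nat.mod_lt _ (pow_log_pos hn)
    have hrm : r < m := lt_of_lt_of_le hrlt (Nat.pow_log_le_self n hm0)
    have hcpos : 0 < c := div_log_pos hn hm0
    have hclt : c < n := div_log_lt hn
    have hBr : baseChange n r < P := powB hn hrlt
    have hBm : baseChange n m = c * P + baseChange n r := by
      rw [baseChange_eq n hm0, ← he, ← hc, ← hr, ← hP]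
    have hBne : baseChange n m ≠ 0 := by
      have hPpos : 0 < P := pow_pos (by omega) _
      have : 0 < c * P := Nat.mul_pos hcpos hPpos
      omega
    have hlog : Nat.log (n + 1) (baseChange n m) = baseChange n e := by
      apply Nat.log_eq_of_pow_le_of_lt_pow
      · rw [hBm]
        calc P ≤ c * P := Nat.le_mul_of_pos_left _ hcpos
          _ ≤ c * P + baseChange n r := Nat.le_add_right _ _
      · rw [hBm, pow_succ, ← hP]
        have h1 : c * P + baseChange n r < (c + 1) * P := by
          have : (c + 1) * P = c * P + P := by ring
          omega
        have h2 : (c + 1) * P ≤ P * (n + 1) := by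
          rw [Nat.mul_comm P (n + 1)]
          exact Nat.mul_le_mul_right _ (by omega)
        omega
    have hdiv : baseChange n m / (n + 1) ^ baseChange n e = c := by
      rw [hBm, ← hP, Nat.add_comm, Nat.add_mul_div_right _ _ (by positivity : 0 < P),
        Nat.div_eq_of_lt hBr]
      omega
    have hmod : baseChange n m % (n + 1) ^ baseChange n e = baseChange n r := by
      rw [hBm, ← hP, Nat.add_comm, Nat.add_mul_mod_self_right, Nat.mod_eq_of_lt hBr]
    rw [oVal_eq (n + 1) hBne, hlog, hdiv, hmod, IH e hem, IH r hrm,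
      oVal_eq n hm0, ← he, ← hc, ← hr]

/-- **Goodstein's theorem.** For every `m` and every base `a ≥ 2`, the
Goodstein sequence for `m` starting at `a` eventually reaches `0`. -/
theorem goodstein (m a : ℕ) (ha : 2 ≤ a) : ∃ k : ℕ, goodsteinSeq a m k = 0 := by
  by_contra hcon
  push_neg at hcon
  set O : ℕ → Ordinal.{0} := fun i => oVal (a + i) (goodsteinSeq a m i) with hO
  have hd : ∀ i, O (i + 1) < O i := by
    intro i
    have hs : goodsteinSeq a m i ≠ 0 := hcon i
    have hn : 2 ≤ a + i := by omega
    have hseq : goodsteinSeq a m (i + 1) = baseChange (a + i) (goodsteinSeq a m i) - 1 := rfl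
    have hBpos : 0 < baseChange (a + i) (goodsteinSeq a m i) := baseChange_pos hn hs
    have h1 : oVal (a + i + 1) (baseChange (a + i) (goodsteinSeq a m i) - 1)
        < oVal (a + i + 1) (baseChange (a + i) (goodsteinSeq a m i)) :=
      monoO (by omega) _ _ (by omega)
    have h2 : oVal (a + i + 1) (baseChange (a + i) (goodsteinSeq a m i))
        = oVal (a + i) (goodsteinSeq a m i) := oVal_baseChange hn _
    show oVal (a + (i + 1)) (goodsteinSeq a m (i + 1)) < oVal (a + i) (goodsteinSeq a m i)
    rw [hseq, show a + (i + 1) = a + i + 1 by omega]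
    exact h1.trans_eq h2
  exact (RelEmbedding.wellFounded_iff_isEmpty.mp Ordinal.lt_wf).false
    (RelEmbedding.natGT O hd)
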